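/- The function u(φ) = sin(φ)/b + (m/(2b⁴))·(γ + 1/(1 − ωₑ²/ω₀²))·(1 − cos φ)·(2b² + J₂R²(1 − cos φ)) satisfies, to first order in m, the orbital equation (du/dφ)² = 1/b² − u² + (m·u/b²)·(2 + J₂R²u²)·(γ + 1/(1 − ωₑ²/ω₀²)) with initial condition u(0) = 0. Precisely: writing u = u₀ + m·u₁ with u₀(φ) = sin(φ)/b, the given u₁ satisfies the linearized ODE 2u₀'u₁' + 2u₀u₁ = (u₀/b²)(2 + J₂R²u₀²)·(γ + 1/(1 − ωₑ²/ω₀²)) with u₁(0) = 0. -/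

import Mathlib

open Real

/-- The first-order correction `u₁` to the flat orbit `u₀(φ) = sin φ / b` satisfies the
linearized orbital ODE `2u₀'u₁' + 2u₀u₁ = (u₀/b²)(2 + J₂R²u₀²)·K` with `u₁(0) = 0`,
where `K = γ + 1/(1 - ωₑ²/ω₀²)`. -/
theorem linearized_orbit_equation_PPN_plasma
    (b m γ J₂ R ωe ω₀ : ℝ) (hb : 0 < b) (hωe : 0 ≤ ωe) (hω : ωe < ω₀) :
    let K : ℝ := γ + 1 / (1 - ωe ^ 2 / ω₀ ^ 2)
    let u₀ : ℝ → ℝ := fun φ => Real.sin φ / b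
    let u₁ : ℝ → ℝ := fun φ =>
      (K / (2 * b ^ 4)) * (1 - Real.cos φ) * (2 * b ^ 2 + J₂ * R ^ 2 * (1 - Real.cos φ))
    (∀ φ : ℝ, 2 * deriv u₀ φ * deriv u₁ φ + 2 * u₀ φ * u₁ φ
        = (u₀ φ / b ^ 2) * (2 + J₂ * R ^ 2 * (u₀ φ) ^ 2) * K) ∧ u₁ 0 = 0 := by
  intro K u₀ u₁
  have hb' : b ≠ 0 := ne_of_gt hb
  constructor
  · intro φ
    have h0 : deriv u₀ φ = Real.cos φ / b := by
      simp [u₀, deriv_div_const]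
    have h1 : HasDerivAt (fun φ => 1 - Real.cos φ) (Real.sin φ) φ := by
      simpa using (Real.hasDerivAt_cos φ).const_sub (1:ℝ)
    have h2 : HasDerivAt u₁
        ((K / (2 * b ^ 4)) * Real.sin φ * (2 * b ^ 2 + J₂ * R ^ 2 * (1 - Real.cos φ))
          + (K / (2 * b ^ 4)) * (1 - Real.cos φ) * (J₂ * R ^ 2 * Real.sin φ)) φ := by
      have := ((h1.const_mul (K / (2 * b ^ 4))).mul
        ((hasDerivAt_const φ (2 * b ^ 2)).add (h1.const_mul (J₂ * R ^ 2))))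
      exact this.congr_deriv (by simp only [Pi.add_apply]; ring)
    rw [h0, h2.deriv]
    simp only [u₀, u₁]
    have hsc := Real.sin_sq_add_cos_sq φ
    field_simp
    linear_combination (-K * Real.sin φ * J₂ * R ^ 2) * hsc
  · simp [u₁]
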